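/- Let x₀ ∈ ℝ, v ≥ 0 and b > 0, and let x, w : ℝ → ℝ be such that x(0) = x₀, w(0) = v, for every t ≥ 0 the function x has derivative w(t) at t, w is differentiable on [0,∞), w(t) ≥ 0 for every t ≥ 0, and w′(t) ≥ −b for every t ≥ 0 at which w(t) > 0. Then for every t ≥ 0, x(t) ≥ brk(t), where brk is the braking trajectory given by brk(t) = x₀ + v·t − (b/2)·t² for 0 ≤ t ≤ v/b and brk(t) = x₀ + v²/(2b) for t ≥ v/b. -/

import Mathlib

/-- The braking trajectory: position at time `t` of a vehicle starting at `x₀`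
with speed `v`, braking at constant rate `b` until stopped (at time `v/b`). -/
noncomputable def brk (x₀ v b : ℝ) (t : ℝ) : ℝ :=
  if t ≤ v / b then x₀ + v * t - (b / 2) * t ^ 2 else x₀ + v ^ 2 / (2 * b)

theorem position_ge_braking_trajectory (x₀ v b : ℝ) (hv : 0 ≤ v) (hb : 0 < b)
    (x w : ℝ → ℝ)
    (hx0 : x 0 = x₀) (hw0 : w 0 = v)
    (hx : ∀ t : ℝ, 0 ≤ t → HasDerivAt x (w t) t)
    (hdiff : ∀ t : ℝ, 0 ≤ t → DifferentiableAt ℝ w t)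
    (hnonneg : ∀ t : ℝ, 0 ≤ t → 0 ≤ w t)
    (hderiv : ∀ t : ℝ, 0 ≤ t → 0 < w t → -b ≤ deriv w t) :
    ∀ t : ℝ, 0 ≤ t → brk x₀ v b t ≤ x t := by
  -- Step 0: derivative bound everywhere on (0,∞): deriv w t ≥ -b
  have hderiv' : ∀ t : ℝ, 0 < t → -b ≤ deriv w t := by
    intro t ht
    rcases lt_or_eq_of_le (hnonneg t ht.le) with hpos | hzero
    · exact hderiv t ht.le hpos
    · -- w t = 0 is a local min
      have hmin : IsLocalMin w t := by
        filter_upwards [Ioi_mem_nhds ht] with s hs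
        rw [← hzero]; exact hnonneg s (le_of_lt hs)
      rw [hmin.deriv_eq_zero]
      linarith
  -- Step 1: w t ≥ v - b * t for all t ≥ 0
  have hw_lb : ∀ t : ℝ, 0 ≤ t → v - b * t ≤ w t := by
    intro t ht
    set g : ℝ → ℝ := fun s => w s + b * s with hg
    have hgd : ∀ s : ℝ, 0 ≤ s → DifferentiableAt ℝ g s := fun s hs =>
      (hdiff s hs).add ((differentiableAt_id.const_mul b))
    have hmono : MonotoneOn g (Set.Ici (0:ℝ)) := by
      apply monotoneOn_of_deriv_nonneg (convex_Ici 0)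
      · exact fun s hs => (hgd s hs).continuousAt.continuousWithinAt
      · intro s hs
        rw [interior_Ici] at hs
        exact (hgd s (le_of_lt hs)).differentiableWithinAt
      · intro s hs
        rw [interior_Ici] at hs
        have : deriv g s = deriv w s + b := by
          rw [hg]
          have h1 : HasDerivAt w (deriv w s) s := (hdiff s hs.le).hasDerivAt
          have h2 : HasDerivAt (fun u : ℝ => b * u) b s := by
            simpa using (hasDerivAt_id s).const_mul b
          exact (h1.add h2).deriv
        rw [this]
        linarith [hderiv' s hs]
    have := hmono (Set.self_mem_Ici) (Set.mem_Ici.mpr ht) ht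
    simp only [hg, hw0] at this
    linarith [this]
  -- Step 2: x t ≥ x₀ + v t - b/2 t² for all t ≥ 0
  have hpar : ∀ t : ℝ, 0 ≤ t → x₀ + v * t - (b / 2) * t ^ 2 ≤ x t := by
    intro t ht
    set f : ℝ → ℝ := fun s => x s - (v * s - (b / 2) * s ^ 2) with hf
    have hfd : ∀ s : ℝ, 0 ≤ s →
        HasDerivAt f (w s - (v - b * s)) s := by
      intro s hs
      have h2 : HasDerivAt (fun u : ℝ => v * u - (b / 2) * u ^ 2) (v - b * s) s := by
        have ha : HasDerivAt (fun u : ℝ => v * u) v s := by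
          simpa using (hasDerivAt_id s).const_mul v
        have hc : HasDerivAt (fun u : ℝ => (b / 2) * u ^ 2) (b * s) s := by
          have : HasDerivAt (fun u : ℝ => u ^ 2) (2 * s) s := by
            simpa using hasDerivAt_pow 2 s
          have := this.const_mul (b / 2)
          exact this.congr_deriv (by ring)
        exact ha.sub hc
      exact (hx s hs).sub h2
    have hmono : MonotoneOn f (Set.Ici (0:ℝ)) := by
      apply monotoneOn_of_deriv_nonneg (convex_Ici 0)
      · exact fun s hs => (hfd s hs).differentiableAt.continuousAt.continuousWithinAt
      · intro s hs
        rw [interior_Ici] at hs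
        exact (hfd s hs.le).differentiableAt.differentiableWithinAt
      · intro s hs
        rw [interior_Ici] at hs
        rw [(hfd s hs.le).deriv]
        linarith [hw_lb s hs.le]
    have := hmono (Set.self_mem_Ici) (Set.mem_Ici.mpr ht) ht
    simp only [hf, hx0] at this
    nlinarith [this]
  -- Step 3: x monotone
  have hxmono : MonotoneOn x (Set.Ici (0:ℝ)) := by
    apply monotoneOn_of_deriv_nonneg (convex_Ici 0)
    · exact fun s hs => (hx s hs).differentiableAt.continuousAt.continuousWithinAt
    · intro s hs
      rw [interior_Ici] at hs
      exact (hx s hs.le).differentiableAt.differentiableWithinAt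
    · intro s hs
      rw [interior_Ici] at hs
      rw [(hx s hs.le).deriv]
      exact hnonneg s hs.le
  -- Conclusion
  intro t ht
  unfold brk
  split_ifs with hcase
  · exact hpar t ht
  · push_neg at hcase
    have hvb : (0:ℝ) ≤ v / b := div_nonneg hv hb.le
    have h1 := hpar (v / b) hvb
    have h2 := hxmono (Set.mem_Ici.mpr hvb) (Set.mem_Ici.mpr ht) hcase.le
    have heq : x₀ + v * (v / b) - (b / 2) * (v / b) ^ 2 = x₀ + v ^ 2 / (2 * b) := by
      field_simp
      ring
    linarith [h1, h2]
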